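/- arXiv:2412.12319 — 4 statements merged into one kernel-verified Lean document; each statement's English description precedes it below -/
import Mathlib

section
/- If s is a complex number with positive imaginary part, then the digamma function ψ(s) = Γ'(s)/Γ(s) also has positive imaginary part; consequently, for any real number a, every complex solution s of ψ(s) = a with s not equal to a non-positive integer is real. -/
open Complex Filter Topology Finset

/-- The digamma function on the complex plane: `ψ(s) = Γ'(s)/Γ(s)`. -/
noncomputable def cdigamma (s : ℂ) : ℂ := deriv Complex.Gamma s / Complex.Gamma s

noncomputable def fTerm (j : ℕ) (s : ℂ) : ℂ :=
  Complex.log (1 + s / (j + 1)) - s / (j + 1)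

noncomputable def gLim (s : ℂ) : ℂ :=
  s * Complex.exp ((Real.eulerMascheroniConstant : ℂ) * s + ∑' j, fTerm j s)

def UHP : Set ℂ := {z : ℂ | 0 < z.im}

lemma isOpen_UHP : IsOpen UHP := isOpen_lt continuous_const Complex.continuous_im

lemma UHP_add_nat_ne_zero {s : ℂ} (hs : s ∈ UHP) (j : ℕ) : s + (j : ℂ) ≠ 0 := by
  intro h
  have h2 : (s + (j : ℂ)).im = 0 := by rw [h]; simp
  simp only [Complex.add_im, Complex.natCast_im, add_zero] at h2
  exact (hs : 0 < s.im).ne' h2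

lemma im_one_add_div (s : ℂ) (j : ℕ) : (1 + s / ((j : ℂ) + 1)).im = s.im / ((j : ℝ) + 1) := by
  have h : ((j : ℂ) + 1) = ((((j : ℝ) + 1) : ℝ) : ℂ) := by push_cast; ring
  rw [Complex.add_im, Complex.one_im, h, Complex.div_ofReal_im, zero_add]

lemma UHP_one_add_div_mem_slitPlane {s : ℂ} (hs : s ∈ UHP) (j : ℕ) :
    1 + s / ((j : ℂ) + 1) ∈ Complex.slitPlane := by
  rw [Complex.mem_slitPlane_iff]
  right
  rw [im_one_add_div]
  have : 0 < s.im / ((j : ℝ) + 1) := by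
    apply div_pos hs
    positivity
  exact this.ne'

lemma UHP_one_add_div_ne_zero {s : ℂ} (hs : s ∈ UHP) (j : ℕ) :
    1 + s / ((j : ℂ) + 1) ≠ 0 :=
  Complex.slitPlane_ne_zero (UHP_one_add_div_mem_slitPlane hs j)

lemma exp_fTerm {s : ℂ} (hs : s ∈ UHP) (j : ℕ) :
    Complex.exp (fTerm j s) = (1 + s / ((j : ℂ) + 1)) * Complex.exp (-(s / ((j : ℂ) + 1))) := by
  rw [fTerm, sub_eq_add_neg, Complex.exp_add, Complex.exp_log (UHP_one_add_div_ne_zero hs j)]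

lemma harmonic_cast_sum (n : ℕ) :
    (((harmonic n : ℝ)) : ℂ) = ∑ j ∈ Finset.range n, ((j : ℂ) + 1)⁻¹ := by
  rw [harmonic]
  push_cast
  rfl


lemma prod_one_add_div_ne_zero {s : ℂ} (hs : s ∈ UHP) (n : ℕ) :
    (∏ j ∈ Finset.range n, (1 + s / ((j : ℂ) + 1))) ≠ 0 :=
  Finset.prod_ne_zero_iff.mpr fun j _ => UHP_one_add_div_ne_zero hs j

lemma prod_cast_add_one (n : ℕ) :
    ∏ x ∈ Finset.range n, ((x : ℂ) + 1) = ((n.factorial : ℕ) : ℂ) := by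
  induction n with
  | zero => simp
  | succ m ih => rw [Finset.prod_range_succ, ih, Nat.factorial_succ]; push_cast; ring

/-- key identity. -/
lemma gammaSeq_inv_eq {s : ℂ} (hs : s ∈ UHP) {n : ℕ} (hn : 1 ≤ n) :
    (Complex.GammaSeq s n)⁻¹ =
      s * Complex.exp ((((harmonic n : ℝ) - Real.log n : ℝ) : ℂ) * s
        + ∑ j ∈ Finset.range n, fTerm j s) := by
  have hs0 : s ≠ 0 := by
    intro h
    have him : 0 < s.im := hs
    simp [h] at him
  have hexpsum : Complex.exp (∑ j ∈ Finset.range n, fTerm j s)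
      = (∏ j ∈ Finset.range n, (1 + s / ((j : ℂ) + 1)))
        * Complex.exp (-(((harmonic n : ℝ) : ℂ) * s)) := by
    rw [Complex.exp_sum]
    have h1 : ∀ j ∈ Finset.range n, Complex.exp (fTerm j s)
        = (1 + s / ((j : ℂ) + 1)) * Complex.exp (-(s / ((j : ℂ) + 1))) := fun j _ => exp_fTerm hs j
    rw [Finset.prod_congr rfl h1, Finset.prod_mul_distrib, ← Complex.exp_sum]
    congr 1
    rw [harmonic_cast_sum, Finset.sum_mul, ← Finset.sum_neg_distrib]
    congr 1
    exact Finset.sum_congr rfl fun j _ => by rw [div_eq_mul_inv]; ring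
  have hprod : ∏ j ∈ Finset.range (n + 1), (s + (j : ℂ))
      = s * (((n.factorial : ℕ) : ℂ) * ∏ j ∈ Finset.range n, (1 + s / ((j : ℂ) + 1))) := by
    rw [Finset.prod_range_succ']
    simp only [Nat.cast_zero, add_zero]
    rw [mul_comm]
    congr 1
    have h2 : ∀ j ∈ Finset.range n, s + ((j : ℕ) + 1 : ℕ) = ((j : ℂ) + 1) * (1 + s / ((j : ℂ) + 1)) := by
      intro j _
      have hj : ((j : ℂ) + 1) ≠ 0 := by
        have := Nat.cast_add_one_ne_zero (R := ℂ) j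
        simpa using this
      field_simp
      push_cast
      ring
    rw [Finset.prod_congr rfl h2, Finset.prod_mul_distrib]
    congr 1
    · exact prod_cast_add_one n
  have hpow : (n : ℂ) ^ s = Complex.exp (((Real.log n : ℝ) : ℂ) * s) := by
    rw [show ((n : ℂ)) = (((n : ℝ) : ℝ) : ℂ) by push_cast; rfl]
    rw [Complex.cpow_def_of_ne_zero (by exact_mod_cast Nat.cast_ne_zero.mpr (by omega)),
      Complex.ofReal_log (Nat.cast_nonneg n)]
  have hQ := prod_one_add_div_ne_zero hs n
  have hfac : ((n.factorial : ℕ) : ℂ) ≠ 0 := Nat.cast_ne_zero.mpr n.factorial_ne_zero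
  rw [Complex.GammaSeq, hprod, hpow, Complex.ofReal_sub, sub_mul, sub_eq_add_neg,
    Complex.exp_add, Complex.exp_add, hexpsum, Complex.exp_neg, Complex.exp_neg]
  field_simp

lemma tuo_mul_id {F : ℕ → ℂ → ℂ} {f : ℂ → ℂ} {K : Set ℂ} {R : ℝ}
    (h : TendstoUniformlyOn F f atTop K) (hb : ∀ s ∈ K, ‖s‖ ≤ R) :
    TendstoUniformlyOn (fun n s => s * F n s) (fun s => s * f s) atTop K := by
  have hb' : ∀ s ∈ K, ‖s‖ ≤ max R 0 := fun s hs => (hb s hs).trans (le_max_left _ _)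
  set R' : ℝ := max R 0 with hR'
  have hR0 : 0 ≤ R' := le_max_right _ _
  rw [Metric.tendstoUniformlyOn_iff] at h ⊢
  intro ε hε
  filter_upwards [h (ε / (R' + 1)) (by positivity)] with n hn x hx
  have hd := hn x hx
  rw [dist_eq_norm] at hd ⊢
  have h2 : ‖x * f x - x * F n x‖ = ‖x‖ * ‖f x - F n x‖ := by
    rw [← norm_mul]; ring_nf
  rw [h2]
  have hxR := hb' x hx
  have hnn := norm_nonneg (f x - F n x)
  have : ε / (R' + 1) * (R' + 1) = ε := by field_simp
  nlinarith [norm_nonneg x]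

lemma tuo_cexp {F : ℕ → ℂ → ℂ} {f : ℂ → ℂ} {K : Set ℂ} {M : ℝ}
    (h : TendstoUniformlyOn F f atTop K) (hM : ∀ s ∈ K, ‖f s‖ ≤ M) :
    TendstoUniformlyOn (fun n s => Complex.exp (F n s)) (fun s => Complex.exp (f s)) atTop K := by
  rw [Metric.tendstoUniformlyOn_iff] at h ⊢
  intro ε hε
  set ε' : ℝ := min 1 (ε / (2 * Real.exp M + 1)) with hε'
  have hM0 : 0 < 2 * Real.exp M + 1 := by positivity
  have hε'pos : 0 < ε' := lt_min one_pos (by positivity)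
  filter_upwards [h ε' hε'pos] with n hn x hx
  have hd := hn x hx
  rw [dist_eq_norm] at hd ⊢
  have key : Complex.exp (f x) - Complex.exp (F n x)
      = Complex.exp (f x) * (1 - Complex.exp (F n x - f x)) := by
    rw [mul_sub, mul_one, ← Complex.exp_add]; ring_nf
  rw [key, norm_mul]
  have h1 : ‖Complex.exp (f x)‖ ≤ Real.exp M := by
    rw [Complex.norm_exp]
    exact Real.exp_le_exp.mpr ((Complex.re_le_norm _).trans (hM x hx))
  have h2 : ‖(1 : ℂ) - Complex.exp (F n x - f x)‖ ≤ 2 * ‖F n x - f x‖ := by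
    rw [norm_sub_rev]
    have := Complex.norm_exp_sub_one_le (x := F n x - f x) ?_
    · simpa using this
    · rw [norm_sub_rev]
      exact le_trans hd.le (min_le_left _ _)
  calc ‖Complex.exp (f x)‖ * ‖1 - Complex.exp (F n x - f x)‖
      ≤ Real.exp M * (2 * ‖F n x - f x‖) := by
        apply mul_le_mul h1 h2 (norm_nonneg _) (Real.exp_nonneg M)
    _ = 2 * Real.exp M * ‖F n x - f x‖ := by ring
    _ < 2 * Real.exp M * ε' + ε' := by
        nlinarith [norm_sub_rev (F n x) (f x) ▸ hd, Real.exp_pos M, norm_nonneg (F n x - f x)]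
    _ ≤ ε := by
        have h3 : ε' ≤ ε / (2 * Real.exp M + 1) := min_le_right _ _
        have h4 : (2 * Real.exp M + 1) * ε' ≤ ε := by
          rw [← le_div_iff₀' hM0]; exact h3
        nlinarith [Real.exp_pos M, hε'pos]

lemma tuo_inv {F : ℕ → ℂ → ℂ} {f : ℂ → ℂ} {K : Set ℂ} {c : ℝ}
    (h : TendstoUniformlyOn F f atTop K) (hc : 0 < c) (hf : ∀ s ∈ K, c ≤ ‖f s‖) :
    TendstoUniformlyOn (fun n s => (F n s)⁻¹) (fun s => (f s)⁻¹) atTop K := by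
  rw [Metric.tendstoUniformlyOn_iff] at h ⊢
  intro ε hε
  filter_upwards [h (min (c / 2) (ε * c ^ 2 / 4)) (by positivity)] with n hn x hx
  have hd := hn x hx
  rw [dist_eq_norm] at hd ⊢
  have hfx : c ≤ ‖f x‖ := hf x hx
  have hFx : c / 2 ≤ ‖F n x‖ := by
    have := norm_sub_norm_le (f x) (F n x)
    have h5 : ‖f x - F n x‖ < c / 2 := lt_of_lt_of_le hd (min_le_left _ _)
    linarith
  have hfx0 : f x ≠ 0 := fun h0 => by simp [h0] at hfx; linarith
  have hFx0 : F n x ≠ 0 := by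
    intro h0
    rw [h0, norm_zero] at hFx
    linarith
  have key : (f x)⁻¹ - (F n x)⁻¹ = (F n x - f x) / (f x * F n x) := by
    field_simp
  rw [key, norm_div, norm_mul]
  have hden : c * (c / 2) ≤ ‖f x‖ * ‖F n x‖ :=
    mul_le_mul hfx hFx (by positivity) (norm_nonneg _)
  have hnum : ‖F n x - f x‖ < ε * c ^ 2 / 4 := by
    rw [norm_sub_rev]; exact lt_of_lt_of_le hd (min_le_right _ _)
  rw [div_lt_iff₀ (by nlinarith)]
  calc ‖F n x - f x‖ < ε * c ^ 2 / 4 := hnum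
    _ = ε * (c * (c / 2)) / 2 := by ring
    _ ≤ ε * (‖f x‖ * ‖F n x‖) := by nlinarith

lemma UHP_ne_neg_nat {s : ℂ} (hs : s ∈ UHP) (m : ℕ) : s ≠ -(m : ℂ) := by
  intro h
  have him : 0 < s.im := hs
  rw [h] at him
  simp at him

lemma tuo_fTerm_sum {K : Set ℂ} (hK : IsCompact K) :
    TendstoUniformlyOn (fun n s => ∑ j ∈ Finset.range n, fTerm j s)
      (fun s => ∑' j, fTerm j s) atTop K := by
  obtain ⟨r, hr⟩ := hK.isBounded.subset_closedBall 0
  have hrK : ∀ s ∈ K, ‖s‖ ≤ r := fun s hs => by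
    simpa using mem_closedBall_zero_iff.mp (hr hs)
  have hsum : Summable (fun j : ℕ => r ^ 2 * (1 / ((j : ℝ) + 1) ^ 2)) := by
    apply Summable.mul_left
    have h0 : Summable (fun n : ℕ => 1 / ((n : ℝ)) ^ 2) := by
      simpa using Real.summable_one_div_nat_pow.mpr one_lt_two
    have := (summable_nat_add_iff 1).mpr h0
    apply this.congr
    intro j
    push_cast
    ring
  have hbound : ∀ᶠ j in Filter.cofinite, ∀ s ∈ K, ‖fTerm j s‖ ≤ r ^ 2 * (1 / ((j : ℝ) + 1) ^ 2) := by
    rw [Nat.cofinite_eq_atTop]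
    filter_upwards [eventually_ge_atTop ⌈2 * r⌉₊] with j hj s hs
    have hj' : 2 * r ≤ (j : ℝ) + 1 := by
      calc 2 * r ≤ (⌈2 * r⌉₊ : ℝ) := Nat.le_ceil _
        _ ≤ (j : ℝ) := by exact_mod_cast hj
        _ ≤ (j : ℝ) + 1 := by linarith
    have hj1 : (0 : ℝ) < (j : ℝ) + 1 := by positivity
    set z : ℂ := s / ((j : ℂ) + 1) with hz
    have hznorm : ‖z‖ ≤ r / ((j : ℝ) + 1) := by
      rw [hz, norm_div]
      have hnorm : ‖((j : ℂ) + 1)‖ = (j : ℝ) + 1 := by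
        rw [show ((j : ℂ) + 1) = (((j + 1 : ℕ)) : ℂ) by push_cast; ring, Complex.norm_natCast]
        push_cast; ring
      rw [hnorm]
      gcongr
      exact hrK s hs
    have hzhalf : ‖z‖ ≤ 1 / 2 := by
      apply hznorm.trans
      rw [div_le_div_iff₀ hj1 two_pos]
      linarith
    have hlt1 : ‖z‖ < 1 := hzhalf.trans_lt (by norm_num)
    have hlog := Complex.norm_log_one_add_sub_self_le hlt1
    have h2 : ‖z‖ ^ 2 * (1 - ‖z‖)⁻¹ / 2 ≤ ‖z‖ ^ 2 := by
      have h3 : (1 : ℝ) - ‖z‖ ≥ 1 / 2 := by linarith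
      have h4 : (1 - ‖z‖)⁻¹ ≤ 2 := by
        rw [inv_le_comm₀ (by linarith) two_pos]
        linarith
      nlinarith [sq_nonneg ‖z‖]
    have h5 : ‖fTerm j s‖ ≤ ‖z‖ ^ 2 := by
      rw [fTerm]
      exact hlog.trans h2
    apply h5.trans
    have h6 : 0 ≤ ‖z‖ := norm_nonneg z
    have h7 : 0 ≤ r / ((j : ℝ) + 1) := h6.trans hznorm
    calc ‖z‖ ^ 2 ≤ (r / ((j : ℝ) + 1)) ^ 2 := by nlinarith
      _ = r ^ 2 * (1 / ((j : ℝ) + 1) ^ 2) := by field_simp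
  intro v hv
  exact tendsto_finset_range.eventually
    (tendstoUniformlyOn_tsum_of_cofinite_eventually hsum hbound v hv)

lemma continuousOn_fTerm (j : ℕ) : ContinuousOn (fTerm j) UHP := by
  intro s hs
  apply ContinuousWithinAt.sub
  · apply (ContinuousAt.continuousWithinAt ?_)
    exact ContinuousAt.clog (continuousAt_const.add (continuousAt_id.div_const _))
      (UHP_one_add_div_mem_slitPlane hs j)
  · exact (continuousAt_id.div_const _).continuousWithinAt

lemma tuo_inv_gammaSeq {K : Set ℂ} (hK : IsCompact K) (hKU : K ⊆ UHP) :
    TendstoUniformlyOn (fun n s => (Complex.GammaSeq s n)⁻¹) gLim atTop K := by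
  classical
  obtain ⟨r, hr⟩ := hK.isBounded.subset_closedBall 0
  have hrK : ∀ s ∈ K, ‖s‖ ≤ r := fun s hs => by
    simpa using mem_closedBall_zero_iff.mp (hr hs)
  have hsum := tuo_fTerm_sum hK
  -- linear part
  have hlin : TendstoUniformlyOn
      (fun n s => ((((harmonic n : ℝ) - Real.log n : ℝ)) : ℂ) * s)
      (fun s => ((Real.eulerMascheroniConstant : ℝ) : ℂ) * s) atTop K := by
    rw [Metric.tendstoUniformlyOn_iff]
    intro ε hε
    have hγ := Real.tendsto_harmonic_sub_log
    have hr0 : (0 : ℝ) ≤ max r 0 := le_max_right _ _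
    have h1 := Metric.tendsto_nhds.mp hγ (ε / (max r 0 + 1)) (by positivity)
    filter_upwards [h1] with n hn x hx
    rw [Real.dist_eq] at hn
    rw [dist_eq_norm]
    have : ((Real.eulerMascheroniConstant : ℝ) : ℂ) * x
        - ((((harmonic n : ℝ) - Real.log n : ℝ)) : ℂ) * x
        = (((Real.eulerMascheroniConstant - ((harmonic n : ℝ) - Real.log n) : ℝ)) : ℂ) * x := by
      push_cast; ring
    rw [this, norm_mul, Complex.norm_real, Real.norm_eq_abs, abs_sub_comm]
    have hx' : ‖x‖ ≤ max r 0 := (hrK x hx).trans (le_max_left _ _)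
    have h2 : ε / (max r 0 + 1) * (max r 0 + 1) = ε := by field_simp
    nlinarith [abs_nonneg (((harmonic n : ℝ) - Real.log n) - Real.eulerMascheroniConstant),
      norm_nonneg x]
  have hadd := hlin.add hsum
  -- bound on limit function
  have hlimcont : ContinuousOn
      (fun s => ((Real.eulerMascheroniConstant : ℝ) : ℂ) * s + ∑' j, fTerm j s) K := by
    apply hadd.continuousOn
    refine Filter.Eventually.frequently ?_
    filter_upwards with n
    apply ContinuousOn.add
    · exact (continuous_const.mul continuous_id).continuousOn
    · apply continuousOn_finset_sum
      intro j _
      exact (continuousOn_fTerm j).mono hKU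
  obtain ⟨M, hM⟩ := hK.exists_bound_of_continuousOn hlimcont
  have hexp := tuo_cexp hadd hM
  have hmul := tuo_mul_id hexp hrK
  apply TendstoUniformlyOn.congr (F := fun n s => s * Complex.exp
      ((((harmonic n : ℝ) - Real.log n : ℝ) : ℂ) * s + ∑ j ∈ Finset.range n, fTerm j s))
    (f := gLim)
  · exact hmul
  · filter_upwards [eventually_ge_atTop 1] with n hn s hs
    exact (gammaSeq_inv_eq (hKU hs) hn).symm

lemma gLim_eq_inv_Gamma {s : ℂ} (hs : s ∈ UHP) : gLim s = (Complex.Gamma s)⁻¹ := by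
  have h1 : TendstoUniformlyOn (fun n z => (Complex.GammaSeq z n)⁻¹) gLim atTop {s} :=
    tuo_inv_gammaSeq isCompact_singleton (by simpa using hs)
  have h2 : Tendsto (fun n => (Complex.GammaSeq s n)⁻¹) atTop (𝓝 (gLim s)) :=
    h1.tendsto_at rfl
  have h3 : Tendsto (fun n => (Complex.GammaSeq s n)⁻¹) atTop (𝓝 (Complex.Gamma s)⁻¹) :=
    (Complex.GammaSeq_tendsto_Gamma s).inv₀ (Complex.Gamma_ne_zero (UHP_ne_neg_nat hs))
  exact tendsto_nhds_unique h2 h3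

lemma tuo_gammaSeq {K : Set ℂ} (hK : IsCompact K) (hKU : K ⊆ UHP) :
    TendstoUniformlyOn (fun n s => Complex.GammaSeq s n) Complex.Gamma atTop K := by
  have hGcont : ContinuousOn Complex.Gamma K := fun s hs =>
    (Complex.differentiableAt_Gamma s (UHP_ne_neg_nat (hKU hs))).continuousAt.continuousWithinAt
  obtain ⟨C, hC⟩ := hK.exists_bound_of_continuousOn hGcont
  set C' : ℝ := max C 1 with hC'
  have hC'1 : (1 : ℝ) ≤ C' := le_max_right _ _
  have hC'0 : (0 : ℝ) < C' := by linarith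
  have hlow : ∀ s ∈ K, C'⁻¹ ≤ ‖gLim s‖ := by
    intro s hs
    rw [gLim_eq_inv_Gamma (hKU hs), norm_inv]
    have hne : Complex.Gamma s ≠ 0 := Complex.Gamma_ne_zero (UHP_ne_neg_nat (hKU hs))
    have hpos : 0 < ‖Complex.Gamma s‖ := norm_pos_iff.mpr hne
    apply inv_anti₀ hpos ((hC s hs).trans (le_max_left _ _))
  have h1 := tuo_inv (tuo_inv_gammaSeq hK hKU) (by positivity) hlow
  have h2 : TendstoUniformlyOn (fun n s => Complex.GammaSeq s n)
      (fun s => (gLim s)⁻¹) atTop K := by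
    apply h1.congr
    filter_upwards with n s _
    exact inv_inv _
  apply h2.congr_right
  intro s hs
  show (gLim s)⁻¹ = _
  rw [gLim_eq_inv_Gamma (hKU hs), inv_inv]

lemma tlu_gammaSeq :
    TendstoLocallyUniformlyOn (fun n (s : ℂ) => Complex.GammaSeq s n) Complex.Gamma atTop UHP :=
  (tendstoLocallyUniformlyOn_iff_forall_isCompact isOpen_UHP).2
    fun K hKU hK => tuo_gammaSeq hK hKU

lemma gammaSeq_eq {n : ℕ} (hn : 1 ≤ n) (s : ℂ) :
    Complex.GammaSeq s n = Complex.exp (((Real.log n : ℝ) : ℂ) * s) * ((n.factorial : ℕ) : ℂ)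
      / ∏ j ∈ Finset.range (n + 1), (s + (j : ℂ)) := by
  rw [Complex.GammaSeq]
  congr 1
  congr 1
  rw [show ((n : ℂ)) = (((n : ℝ) : ℝ) : ℂ) by push_cast; rfl]
  rw [Complex.cpow_def_of_ne_zero (by exact_mod_cast Nat.cast_ne_zero.mpr (by omega)),
    Complex.ofReal_log (Nat.cast_nonneg n)]

lemma differentiableOn_gammaSeq {n : ℕ} (hn : 1 ≤ n) :
    DifferentiableOn ℂ (fun s => Complex.GammaSeq s n) UHP := by
  have : ∀ s ∈ UHP, Complex.GammaSeq s n = Complex.exp (((Real.log n : ℝ) : ℂ) * s)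
      * ((n.factorial : ℕ) : ℂ) / ∏ j ∈ Finset.range (n + 1), (s + (j : ℂ)) :=
    fun s _ => gammaSeq_eq hn s
  apply DifferentiableOn.congr ?_ this
  apply DifferentiableOn.div
  · apply DifferentiableOn.mul_const
    apply DifferentiableOn.cexp
    exact (differentiable_const _).mul differentiable_id |>.differentiableOn
  · exact DifferentiableOn.fun_finsetProd fun j _ =>
      (differentiable_id.add_const _).differentiableOn
  · intro s hs
    exact Finset.prod_ne_zero_iff.mpr fun j _ => UHP_add_nat_ne_zero hs j

lemma logDeriv_gammaSeq {s : ℂ} (hs : s ∈ UHP) {n : ℕ} (hn : 1 ≤ n) :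
    logDeriv (fun z => Complex.GammaSeq z n) s
      = ((Real.log n : ℝ) : ℂ) - ∑ j ∈ Finset.range (n + 1), (s + (j : ℂ))⁻¹ := by
  set c : ℂ := ((Real.log n : ℝ) : ℂ) with hc
  have hfun : (fun z => Complex.GammaSeq z n) = fun z =>
      (Complex.exp (c * z) * ((n.factorial : ℕ) : ℂ))
        / ∏ j ∈ Finset.range (n + 1), (z + (j : ℂ)) := by
    funext z
    rw [gammaSeq_eq hn]
  rw [hfun]
  have hP : ∀ z ∈ UHP, (∏ j ∈ Finset.range (n + 1), (z + (j : ℂ))) ≠ 0 := fun z hz =>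
    Finset.prod_ne_zero_iff.mpr fun j _ => UHP_add_nat_ne_zero hz j
  have hdnum : DifferentiableAt ℂ (fun z => Complex.exp (c * z) * ((n.factorial : ℕ) : ℂ)) s := by
    apply DifferentiableAt.mul_const
    exact (((differentiable_const c).mul differentiable_id).cexp).differentiableAt
  have hdden : DifferentiableAt ℂ (fun z => ∏ j ∈ Finset.range (n + 1), (z + (j : ℂ))) s :=
    DifferentiableAt.fun_finsetProd fun j _ => (differentiable_id.add_const _).differentiableAt
  have hnum_ne : Complex.exp (c * s) * ((n.factorial : ℕ) : ℂ) ≠ 0 :=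
    mul_ne_zero (Complex.exp_ne_zero _) (Nat.cast_ne_zero.mpr n.factorial_ne_zero)
  rw [logDeriv_div s hnum_ne (hP s hs) hdnum hdden]
  congr 1
  · rw [logDeriv_mul_const s _ (Nat.cast_ne_zero.mpr n.factorial_ne_zero)]
    have hder : HasDerivAt (fun z => Complex.exp (c * z)) (Complex.exp (c * s) * c) s := by
      have h0 : HasDerivAt (fun z : ℂ => c * z) c s := by
        simpa using (hasDerivAt_id s).const_mul c
      exact h0.cexp
    rw [logDeriv_apply, hder.deriv, mul_comm, mul_div_assoc, div_self (Complex.exp_ne_zero _),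
      mul_one]
  · rw [logDeriv_prod (fun j _ => UHP_add_nat_ne_zero hs j)
      (fun j _ => (differentiable_id.add_const _).differentiableAt)]
    apply Finset.sum_congr rfl
    intro j _
    rw [logDeriv_apply, deriv_add_const, deriv_id'']
    rw [one_div]

lemma im_logDeriv_gammaSeq_ge {s : ℂ} (hs : s ∈ UHP) {n : ℕ} (hn : 1 ≤ n) :
    s.im / Complex.normSq s ≤ (logDeriv (fun z => Complex.GammaSeq z n) s).im := by
  rw [logDeriv_gammaSeq hs hn, Complex.sub_im, Complex.ofReal_im, zero_sub, Complex.im_sum]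
  have hterm : ∀ j ∈ Finset.range (n + 1),
      ((s + (j : ℂ))⁻¹).im = -(s.im / Complex.normSq (s + (j : ℂ))) := by
    intro j _
    rw [Complex.inv_im, Complex.add_im, Complex.natCast_im, add_zero, neg_div]
  rw [Finset.sum_congr rfl hterm, Finset.sum_neg_distrib, neg_neg]
  have h0 : s.im / Complex.normSq s = s.im / Complex.normSq (s + ((0 : ℕ) : ℂ)) := by
    norm_num
  rw [h0]
  refine Finset.single_le_sum (f := fun j : ℕ => s.im / Complex.normSq (s + (j : ℂ)))
    (fun j _ => ?_) (by simp : (0 : ℕ) ∈ Finset.range (n + 1))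
  have him : 0 < s.im := hs
  have hne := UHP_add_nat_ne_zero hs j
  have := Complex.normSq_pos.mpr hne
  positivity

lemma im_digamma_pos {s : ℂ} (hs : 0 < s.im) : 0 < (cdigamma s).im := by
  have hsU : s ∈ UHP := hs
  have hdiff : ∀ᶠ n : ℕ in atTop, DifferentiableOn ℂ (fun z => Complex.GammaSeq z n) UHP := by
    filter_upwards [eventually_ge_atTop 1] with n hn
    exact differentiableOn_gammaSeq hn
  have hld := Complex.logDeriv_tendsto (f := fun n z => Complex.GammaSeq z n) (g := Complex.Gamma)
    isOpen_UHP hsU tlu_gammaSeq hdiff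
    (Complex.Gamma_ne_zero (UHP_ne_neg_nat hsU))
  have hIm : Tendsto (fun n => (logDeriv (fun z => Complex.GammaSeq z n) s).im) atTop
      (𝓝 ((logDeriv Complex.Gamma s).im)) :=
    (Complex.continuous_im.continuousAt).tendsto.comp hld
  have hs0 : s ≠ 0 := by
    intro h
    rw [h] at hs
    simp at hs
  have hc : 0 < s.im / Complex.normSq s := div_pos hs (Complex.normSq_pos.mpr hs0)
  have hge : s.im / Complex.normSq s ≤ (logDeriv Complex.Gamma s).im := by
    apply ge_of_tendsto hIm
    filter_upwards [eventually_ge_atTop 1] with n hn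
    exact im_logDeriv_gammaSeq_ge hsU hn
  have : cdigamma s = logDeriv Complex.Gamma s := rfl
  rw [this]
  linarith

lemma hasDerivAt_conj_conj {f : ℂ → ℂ} {d z : ℂ} (h : HasDerivAt f d z) :
    HasDerivAt (fun w => (starRingEnd ℂ) (f ((starRingEnd ℂ) w))) ((starRingEnd ℂ) d)
      ((starRingEnd ℂ) z) := by
  rw [hasDerivAt_iff_tendsto_slope] at h ⊢
  have hconj : Tendsto (fun w : ℂ => (starRingEnd ℂ) w) (𝓝[≠] ((starRingEnd ℂ) z)) (𝓝[≠] z) := by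
    apply tendsto_nhdsWithin_of_tendsto_nhds_of_eventually_within
    · have hc : Tendsto (fun w : ℂ => (starRingEnd ℂ) w) (𝓝 ((starRingEnd ℂ) z)) (𝓝 z) := by
        have := (Complex.continuous_conj.tendsto ((starRingEnd ℂ) z))
        simpa using this
      exact hc.mono_left nhdsWithin_le_nhds
    · filter_upwards [self_mem_nhdsWithin] with w hw
      simp only [Set.mem_compl_iff, Set.mem_singleton_iff] at hw ⊢
      intro hcontra
      apply hw
      have := congrArg (starRingEnd ℂ) hcontra
      simpa using this
  have h1 := h.comp hconj
  have h2 := (Complex.continuous_conj.tendsto d).comp h1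
  apply h2.congr
  intro w
  simp only [Function.comp_apply]
  rw [slope_def_field, slope_def_field, map_div₀, map_sub, map_sub]
  simp

lemma deriv_Gamma_conj {s : ℂ} (hs : ∀ m : ℕ, s ≠ -(m : ℂ)) :
    deriv Complex.Gamma ((starRingEnd ℂ) s) = (starRingEnd ℂ) (deriv Complex.Gamma s) := by
  have hcs : ∀ m : ℕ, (starRingEnd ℂ) s ≠ -(m : ℂ) := by
    intro m hcontra
    apply hs m
    have := congrArg (starRingEnd ℂ) hcontra
    simpa using this
  have hd := (Complex.differentiableAt_Gamma _ hcs).hasDerivAt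
  have h2 := hasDerivAt_conj_conj hd
  have hfun : (fun w => (starRingEnd ℂ) (Complex.Gamma ((starRingEnd ℂ) w))) = Complex.Gamma := by
    funext w
    rw [Complex.Gamma_conj]
    simp
  rw [hfun] at h2
  have h3 : ((starRingEnd ℂ) ((starRingEnd ℂ) s)) = s := by simp
  rw [h3] at h2
  have h4 := h2.deriv
  rw [h4]
  simp

lemma cdigamma_conj {s : ℂ} (hs : ∀ m : ℕ, s ≠ -(m : ℂ)) :
    cdigamma ((starRingEnd ℂ) s) = (starRingEnd ℂ) (cdigamma s) := by
  rw [cdigamma, cdigamma, deriv_Gamma_conj hs, Complex.Gamma_conj, ← map_div₀]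

/--
If `s` is a complex number with positive imaginary part, then the digamma function
`ψ(s) = Γ'(s)/Γ(s)` also has positive imaginary part; consequently, for any real number `a`,
every complex solution `s` of `ψ(s) = a` with `s` not equal to a non-positive integer is real.
-/
theorem stmt0 :
    (∀ s : ℂ, 0 < s.im → 0 < (cdigamma s).im) ∧
    (∀ (a : ℝ) (s : ℂ), (∀ n : ℕ, s ≠ -(n : ℂ)) → cdigamma s = (a : ℂ) → s.im = 0) := by
  constructor
  · exact fun s hs => im_digamma_pos hs
  · intro a s hpole heq
    rcases lt_trichotomy s.im 0 with hlt | h0 | hgt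
    · exfalso
      have h1 : 0 < ((starRingEnd ℂ) s).im := by
        rw [Complex.conj_im]; linarith
      have h2 := im_digamma_pos h1
      rw [cdigamma_conj hpole, heq] at h2
      simp at h2
    · exact h0
    · exfalso
      have h2 := im_digamma_pos hgt
      rw [heq] at h2
      simp at h2
end

section
/- For every integer n ≥ 1 and every complex number s with Re s > -1 and s ≠ 0, one has ∫₀¹ x^{s-1}(1 - (1-x)^{n-1}) dx = 1/s - Γ(s)Γ(n)/Γ(n+s), where Γ is the complex Gamma function. -/
open MeasureTheory

lemma stmt2_aux (s : ℂ) (hs : -1 < s.re) (hs0 : s ≠ 0) : ∀ m : ℕ,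
    IntervalIntegrable (fun x : ℝ => (x:ℂ)^(s-1) * (1 - (1-(x:ℂ))^m)) volume 0 1 ∧
    ∫ x in (0:ℝ)..1, (x:ℂ)^(s-1) * (1 - (1-(x:ℂ))^m) =
      1/s - Complex.Gamma s * Complex.Gamma ((m:ℂ)+1) / Complex.Gamma ((m:ℂ)+1+s) := by
  have hGs : Complex.Gamma s ≠ 0 := by
    refine Complex.Gamma_ne_zero fun k => ?_
    cases k with
    | zero => simpa using hs0
    | succ k =>
      intro h
      rw [h] at hs
      simp only [Complex.neg_re, Complex.natCast_re] at hs
      have : (1:ℝ) ≤ (k+1 : ℕ) := by exact_mod_cast Nat.succ_le_succ (Nat.zero_le k)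
      linarith
  intro m
  induction m with
  | zero =>
    constructor
    · simp
    · have h1 : ((0:ℕ):ℂ) + 1 = 1 := by norm_num
      have h2 : (1:ℂ) + s = s + 1 := by ring
      rw [h1, h2, Complex.Gamma_one, Complex.Gamma_add_one s hs0]
      simp only [pow_zero, sub_self, mul_zero, intervalIntegral.integral_zero]
      field_simp
      ring
  | succ m ih =>
    obtain ⟨hInt, hEq⟩ := ih
    -- the beta-type integrand
    have hg : IntervalIntegrable
        (fun x : ℝ => (x:ℂ)^((s+1)-1) * (1-(x:ℂ))^(((m:ℂ)+1)-1)) volume 0 1 := by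
      apply Complex.betaIntegral_convergent
      · simp only [Complex.add_re, Complex.one_re]; linarith
      · simp only [Complex.add_re, Complex.one_re, Complex.natCast_re]; positivity
    have hfun : (fun x : ℝ => (x:ℂ)^((s+1)-1) * (1-(x:ℂ))^(((m:ℂ)+1)-1)) =
        fun x : ℝ => (x:ℂ)^((s+1)-1) * (1-(x:ℂ))^m := by
      funext x
      rw [show ((m:ℂ)+1)-1 = ((m:ℕ):ℂ) by ring, Complex.cpow_natCast]
    rw [hfun] at hg
    have hgval : ∫ x in (0:ℝ)..1, (x:ℂ)^((s+1)-1) * (1-(x:ℂ))^m =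
        Complex.Gamma (s+1) * Complex.Gamma ((m:ℂ)+1) /
          Complex.Gamma ((s+1) + ((m:ℂ)+1)) := by
      have hb := Complex.Gamma_mul_Gamma_eq_betaIntegral (s := s+1) (t := (m:ℂ)+1)
        (by simp only [Complex.add_re, Complex.one_re]; linarith)
        (by simp only [Complex.add_re, Complex.one_re, Complex.natCast_re]; positivity)
      have hC : Complex.Gamma ((s+1) + ((m:ℂ)+1)) ≠ 0 := by
        refine Complex.Gamma_ne_zero_of_re_pos ?_
        simp only [Complex.add_re, Complex.one_re, Complex.natCast_re]
        nlinarith [Nat.cast_nonneg (α := ℝ) m]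
      rw [Complex.betaIntegral, hfun] at hb
      field_simp [hb]
      rw [hb]; ring
    -- the a.e. decomposition
    have heq : ∀ x ∈ Set.uIoc (0:ℝ) 1,
        (x:ℂ)^(s-1) * (1 - (1-(x:ℂ))^(m+1)) =
        (x:ℂ)^(s-1) * (1 - (1-(x:ℂ))^m) + (x:ℂ)^((s+1)-1) * (1-(x:ℂ))^m := by
      intro x hx
      rw [Set.uIoc_of_le (by norm_num : (0:ℝ) ≤ 1)] at hx
      have hx0 : (x:ℂ) ≠ 0 := by
        exact_mod_cast ne_of_gt (by exact_mod_cast hx.1 : (0:ℝ) < x)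
      have : (x:ℂ)^((s+1)-1) = (x:ℂ)^(s-1) * (x:ℂ) := by
        have : (s+1)-1 = (s-1) + 1 := by ring
        rw [this, Complex.cpow_add _ _ hx0, Complex.cpow_one]
      rw [this]
      ring
    constructor
    · refine (hInt.add hg).congr ?_
      exact fun x hx => (heq x hx).symm
    · rw [intervalIntegral.integral_congr_ae (ae_of_all _ heq),
        intervalIntegral.integral_add hInt hg, hEq, hgval]
      -- Gamma function algebra
      have hB : Complex.Gamma ((m:ℂ)+1) ≠ 0 :=
        Complex.Gamma_ne_zero_of_re_pos (by
          simp only [Complex.add_re, Complex.one_re, Complex.natCast_re]; positivity)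
      have hC : Complex.Gamma ((m:ℂ)+1+s) ≠ 0 :=
        Complex.Gamma_ne_zero_of_re_pos (by
          simp only [Complex.add_re, Complex.one_re, Complex.natCast_re]; linarith)
      have hms : (m:ℂ)+1+s ≠ 0 := by
        intro h
        have := congrArg Complex.re h
        simp only [Complex.add_re, Complex.one_re, Complex.natCast_re, Complex.zero_re] at this
        have : (0:ℝ) ≤ (m:ℝ) := Nat.cast_nonneg m
        linarith [congrArg Complex.re h, Nat.cast_nonneg (α := ℝ) m]
      have h1 : Complex.Gamma (s+1) = s * Complex.Gamma s := Complex.Gamma_add_one s hs0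
      have h2 : Complex.Gamma (((m+1:ℕ) : ℂ) + 1) = ((m:ℂ)+1) * Complex.Gamma ((m:ℂ)+1) := by
        have : (((m+1:ℕ) : ℂ) + 1) = ((m:ℂ)+1) + 1 := by push_cast; ring
        rw [this, Complex.Gamma_add_one _ (by
          intro h
          have := congrArg Complex.re h
          simp only [Complex.add_re, Complex.one_re, Complex.natCast_re, Complex.zero_re] at this
          linarith [Nat.cast_nonneg (α := ℝ) m])]
      have h3 : Complex.Gamma (((m+1:ℕ) : ℂ) + 1 + s) = ((m:ℂ)+1+s) * Complex.Gamma ((m:ℂ)+1+s) := by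
        have : (((m+1:ℕ) : ℂ) + 1 + s) = ((m:ℂ)+1+s) + 1 := by push_cast; ring
        rw [this, Complex.Gamma_add_one _ hms]
      have h4 : (s+1) + ((m:ℂ)+1) = ((m:ℂ)+1+s) + 1 := by ring
      rw [h4, Complex.Gamma_add_one _ hms] at *
      rw [h1, h2, h3]
      field_simp
      ring
  
/--
For every integer `n ≥ 1` and every complex number `s` with `Re s > -1` and `s ≠ 0`, one has
`∫₀¹ x^(s-1)(1 - (1-x)^(n-1)) dx = 1/s - Γ(s)Γ(n)/Γ(n+s)`, where `Γ` is the complex Gamma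
function.
-/
theorem stmt2 (n : ℕ) (hn : 1 ≤ n) (s : ℂ) (hs : -1 < s.re) (hs0 : s ≠ 0) :
    ∫ x in (0:ℝ)..1, (x : ℂ) ^ (s - 1) * (1 - (1 - (x : ℂ)) ^ (n - 1)) =
      1 / s - Complex.Gamma s * Complex.Gamma (n : ℂ) / Complex.Gamma ((n : ℂ) + s) := by
  obtain ⟨m, rfl⟩ := Nat.exists_eq_add_of_le hn
  have := (stmt2_aux s hs hs0 m).2
  simp only [Nat.add_sub_cancel_left]
  rw [show ((1+m:ℕ):ℂ) = (m:ℂ)+1 by push_cast; ring]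
  exact this
end

section
/- For every integer n ≥ 2 and every complex number s = σ + iτ with σ > -1 and s ≠ 0, one has |Γ(s)Γ(n)/Γ(s+n)| ≤ Γ(σ+2)Γ(n)/(|s(s+1)| · Γ(σ+n)), where Γ denotes the Gamma function (complex on the left, real and positive on the right). -/
/--
For every integer `n ≥ 2` and every complex number `s = σ + iτ` with `σ > -1` and `s ≠ 0`,
one has `|Γ(s)Γ(n)/Γ(s+n)| ≤ Γ(σ+2)Γ(n)/(|s(s+1)| · Γ(σ+n))`, where `Γ` denotes the Gamma
function (complex on the left, real and positive on the right).
-/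
theorem stmt4 (n : ℕ) (hn : 2 ≤ n) (s : ℂ) (hs : -1 < s.re) (hs0 : s ≠ 0) :
    ‖Complex.Gamma s * Complex.Gamma (n : ℂ) / Complex.Gamma (s + (n : ℂ))‖ ≤
      Real.Gamma (s.re + 2) * Real.Gamma (n : ℝ) /
        (‖s * (s + 1)‖ * Real.Gamma (s.re + n)) := by
  have hΓs : Complex.Gamma s ≠ 0 := by
    apply Complex.Gamma_ne_zero
    intro m
    cases m with
    | zero => simpa using hs0
    | succ k =>
      intro h
      have h2 := congrArg Complex.re h
      push_cast at h2
      simp at h2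
      have : (0:ℝ) ≤ (k:ℝ) := by positivity
      linarith
  have hs1 : s + 1 ≠ 0 := by
    intro h
    have := congrArg Complex.re h
    simp at this
    linarith
  have habs : 0 < ‖s * (s + 1)‖ :=
    norm_pos_iff.mpr (mul_ne_zero hs0 hs1)
  have hΓσ2 : 0 < Real.Gamma (s.re + 2) := Real.Gamma_pos_of_pos (by linarith)
  induction n, hn using Nat.le_induction with
  | base =>
    push_cast
    have h2 : Complex.Gamma (s + 2) = s * (s + 1) * Complex.Gamma s := by
      have e : s + 2 = (s + 1) + 1 := by ring
      rw [e, Complex.Gamma_add_one _ hs1, Complex.Gamma_add_one _ hs0]; ring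
    have hg2 : Complex.Gamma 2 = 1 := by
      rw [show (2:ℂ) = 1 + 1 by norm_num, Complex.Gamma_add_one _ one_ne_zero,
        Complex.Gamma_one, mul_one]
    rw [h2, hg2, Real.Gamma_two]
    have e1 : Complex.Gamma s * 1 / (s * (s + 1) * Complex.Gamma s) = 1 / (s * (s + 1)) := by
      field_simp
    have e5 : Real.Gamma (s.re + 2) * 1 / (‖s * (s + 1)‖ * Real.Gamma (s.re + 2))
        = 1 / ‖s * (s + 1)‖ := by
      rw [mul_one, mul_comm (‖s * (s + 1)‖), ← div_div,
        div_self (ne_of_gt hΓσ2)]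
    rw [e1, norm_div, norm_one, e5]
  | succ n hn IH =>
    have hn2 : (2:ℝ) ≤ (n:ℝ) := by exact_mod_cast hn
    have hn0 : (n:ℂ) ≠ 0 := by
      exact_mod_cast (by omega : n ≠ 0)
    have hsnre : 0 < s.re + (n:ℝ) := by linarith
    have hsn : s + (n:ℂ) ≠ 0 := by
      intro h
      have := congrArg Complex.re h
      simp at this
      linarith
    have hΓsn : Complex.Gamma (s + (n:ℂ)) ≠ 0 := by
      apply Complex.Gamma_ne_zero_of_re_pos
      simpa using hsnre
    have hΓn : 0 < Real.Gamma (n:ℝ) := Real.Gamma_pos_of_pos (by linarith)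
    have hΓσn : 0 < Real.Gamma (s.re + (n:ℝ)) := Real.Gamma_pos_of_pos hsnre
    -- recurrences
    have e1 : Complex.Gamma ((n:ℂ) + 1) = n * Complex.Gamma n := Complex.Gamma_add_one _ hn0
    have e2 : Complex.Gamma (s + ((n:ℂ) + 1)) = (s + n) * Complex.Gamma (s + n) := by
      have e : s + ((n:ℂ) + 1) = (s + n) + 1 := by ring
      rw [e, Complex.Gamma_add_one _ hsn]
    have e3 : Real.Gamma (s.re + ((n:ℝ) + 1)) = (s.re + n) * Real.Gamma (s.re + n) := by
      have e : s.re + ((n:ℝ) + 1) = (s.re + n) + 1 := by ring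
      rw [e, Real.Gamma_add_one (ne_of_gt hsnre)]
    have e4 : Real.Gamma ((n:ℝ) + 1) = n * Real.Gamma n :=
      Real.Gamma_add_one (by positivity)
    push_cast
    rw [e1, e2, e3, e4]
    have key : Complex.Gamma s * ((n:ℂ) * Complex.Gamma n) / ((s + n) * Complex.Gamma (s + n))
        = (Complex.Gamma s * Complex.Gamma n / Complex.Gamma (s + n)) * ((n:ℂ) / (s + n)) := by
      field_simp
    have habs2 : ‖(n:ℂ) / (s + n)‖ = (n:ℝ) / ‖s + n‖ := by
      rw [norm_div, Complex.norm_natCast]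
    rw [key, norm_mul, habs2]
    have hineq : (n:ℝ) / ‖s + n‖ ≤ (n:ℝ) / (s.re + n) := by
      apply div_le_div_of_nonneg_left (by positivity) hsnre
      calc s.re + (n:ℝ) = (s + (n:ℂ)).re := by simp
        _ ≤ ‖s + n‖ := Complex.re_le_norm _
    calc ‖Complex.Gamma s * Complex.Gamma n / Complex.Gamma (s + n)‖ *
          ((n:ℝ) / ‖s + n‖)
        ≤ (Real.Gamma (s.re + 2) * Real.Gamma n /
            (‖s * (s + 1)‖ * Real.Gamma (s.re + n))) * ((n:ℝ) / (s.re + n)) := by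
          apply mul_le_mul IH hineq (by positivity) (by positivity)
      _ = Real.Gamma (s.re + 2) * ((n:ℝ) * Real.Gamma n) /
            (‖s * (s + 1)‖ * ((s.re + n) * Real.Gamma (s.re + n))) := by
          field_simp
end

section
/- Let μ be a σ-finite Borel measure on the interval (0,1) whose Mellin transform satisfies ∫₀¹ x^{s-1} dμ(x) = 1/(ψ(s) - ψ(1)) for every real s > 1. Then for every integer n ≥ 2, ∫₀¹ (1 - (1-x)^{n-1}) dμ(x) = Σ_{j=1}^{n-1} (-1)^{j-1} · C(n-1, j) / h_j, where h_j = Σ_{i=1}^j 1/i and C(n-1,j) is the binomial coefficient. -/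
open MeasureTheory

/-- The digamma function on the reals: `ψ(x) = Γ'(x)/Γ(x)`. -/
noncomputable def digamma (x : ℝ) : ℝ := deriv Real.Gamma x / Real.Gamma x

/-- The `m`-th harmonic number `h_m = ∑_{i=1}^m 1/i`, with `h_0 = 0`. -/
noncomputable def harm (m : ℕ) : ℝ := ∑ i ∈ Finset.range m, (1 : ℝ) / (i + 1)


lemma Gamma_deriv_add_one {x : ℝ} (hx : 0 < x) :
    deriv Real.Gamma (x + 1) = Real.Gamma x + x * deriv Real.Gamma x := by
  have hd : DifferentiableAt ℝ Real.Gamma x :=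
    Real.differentiableAt_Gamma (fun n => by
      have : (0:ℝ) ≤ n := Nat.cast_nonneg n
      intro h; rw [h] at hx; linarith)
  have h1 : deriv (fun y => Real.Gamma (y + 1)) x = deriv Real.Gamma (x + 1) := by
    rw [deriv_comp_add_const]
  have h2 : (fun y => Real.Gamma (y + 1)) =ᶠ[nhds x] fun y => y * Real.Gamma y := by
    filter_upwards [eventually_ne_nhds hx.ne'] with y hy using Real.Gamma_add_one hy
  rw [← h1, h2.deriv_eq, deriv_fun_mul differentiableAt_fun_id hd]
  simp

lemma digamma_add_one {x : ℝ} (hx : 0 < x) : digamma (x + 1) = digamma x + 1 / x := by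
  have hΓ : Real.Gamma x ≠ 0 := (Real.Gamma_pos_of_pos hx).ne'
  unfold digamma
  rw [Real.Gamma_add_one hx.ne', Gamma_deriv_add_one hx]
  field_simp
  ring

lemma digamma_nat (m : ℕ) : digamma (m + 1) = digamma 1 + harm m := by
  induction m with
  | zero => simp [harm]
  | succ k ih =>
      have h : ((k : ℝ) + 1) + 1 = ((k + 1 : ℕ) : ℝ) + 1 := by push_cast; ring
      have hpos : (0:ℝ) < (k : ℝ) + 1 := by positivity
      rw [← h, digamma_add_one hpos, ih]
      unfold harm
      rw [Finset.sum_range_succ]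
      push_cast
      ring

lemma harm_pos {j : ℕ} (hj : 1 ≤ j) : 0 < harm j := by
  apply Finset.sum_pos
  · intro i _; positivity
  · exact ⟨0, Finset.mem_range.mpr hj⟩

lemma expand (m : ℕ) (x : ℝ) :
    1 - (1 - x) ^ m = ∑ j ∈ Finset.Icc 1 m, (-1:ℝ) ^ (j - 1) * (m.choose j) * x ^ j := by
  rw [show (1 : ℝ) - x = (-x) + 1 by ring, add_pow]
  simp only [one_pow, mul_one]
  have hins : Finset.range (m + 1) = insert 0 (Finset.Icc 1 m) := by
    ext k; simp [Nat.lt_succ_iff]; omega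
  rw [hins, Finset.sum_insert (by simp)]
  simp only [pow_zero, Nat.choose_zero_right, Nat.cast_one, one_mul]
  rw [show ∀ a : ℝ, 1 - (1 + a) = -a from fun a => by ring, ← Finset.sum_neg_distrib]
  apply Finset.sum_congr rfl
  intro j hj
  obtain ⟨h1, _⟩ := Finset.mem_Icc.mp hj
  obtain ⟨k, rfl⟩ := Nat.exists_eq_add_of_le h1
  rw [neg_pow]
  simp
  ring

/--
Let `μ` be a σ-finite Borel measure on the interval `(0,1)` whose Mellin transform satisfies
`∫₀¹ x^{s-1} dμ(x) = 1/(ψ(s) - ψ(1))` for every real `s > 1`. Then for every integer `n ≥ 2`,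
`∫₀¹ (1 - (1-x)^{n-1}) dμ(x) = Σ_{j=1}^{n-1} (-1)^{j-1} · C(n-1, j) / h_j`,
where `h_j = Σ_{i=1}^j 1/i` and `C(n-1,j)` is the binomial coefficient.
-/
theorem stmt11 (μ : Measure ℝ) [SigmaFinite μ]
    (hsupp : μ (Set.Ioo (0:ℝ) 1)ᶜ = 0)
    (hMellin : ∀ s : ℝ, 1 < s →
      ∫ x in Set.Ioo (0:ℝ) 1, x ^ (s - 1) ∂μ = 1 / (digamma s - digamma 1))
    (n : ℕ) (hn : 2 ≤ n) :
    ∫ x in Set.Ioo (0:ℝ) 1, (1 - (1 - x) ^ (n - 1)) ∂μ =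
      ∑ j ∈ Finset.Icc 1 (n - 1), (-1 : ℝ) ^ (j - 1) * ((n - 1).choose j) / harm j := by
  set m := n - 1 with hm
  -- moments
  have hmom : ∀ j : ℕ, 1 ≤ j →
      ∫ x in Set.Ioo (0:ℝ) 1, x ^ j ∂μ = 1 / harm j := by
    intro j hj
    have hs : (1:ℝ) < (j:ℝ) + 1 := by
      have : (1:ℝ) ≤ (j:ℝ) := by exact_mod_cast hj
      linarith
    have := hMellin ((j:ℝ) + 1) hs
    rw [digamma_nat j] at this
    have heq : ∀ x ∈ Set.Ioo (0:ℝ) 1, x ^ ((j:ℝ) + 1 - 1) = x ^ j := by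
      intro x _
      rw [show (j:ℝ) + 1 - 1 = (j:ℝ) by ring, Real.rpow_natCast]
    rw [setIntegral_congr_fun measurableSet_Ioo heq] at this
    rw [this]
    ring_nf
  have hint : ∀ j : ℕ, 1 ≤ j →
      Integrable (fun x => x ^ j) (μ.restrict (Set.Ioo (0:ℝ) 1)) := by
    intro j hj
    by_contra h
    have := hmom j hj
    rw [integral_undef h] at this
    have := (harm_pos hj)
    have : (1:ℝ) / harm j ≠ 0 := by positivity
    exact this (by linarith [hmom j hj, integral_undef h])
  have hfun : (fun x : ℝ => 1 - (1 - x) ^ m) =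
      fun x => ∑ j ∈ Finset.Icc 1 m, (-1:ℝ) ^ (j - 1) * (m.choose j) * x ^ j := by
    funext x; exact expand m x
  rw [hfun, integral_finset_sum _ (fun j hj => by
    obtain ⟨h1, _⟩ := Finset.mem_Icc.mp hj
    exact ((hint j h1).const_mul _))]
  apply Finset.sum_congr rfl
  intro j hj
  obtain ⟨h1, _⟩ := Finset.mem_Icc.mp hj
  rw [integral_const_mul, hmom j h1]
  rw [mul_one_div]
end
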